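/- arXiv:2502.12888 — 3 statements merged into one kernel-verified Lean document; each statement's English description precedes it below -/
import Mathlib

section
/- Every hyperbolic Laurent polynomial P(z) with complex coefficients (i.e., P(z) ≠ 0 for all z ∈ ℂ with |z| = 1, and P not identically zero) has an absolutely summable convolution inverse as a bi-infinite sequence: there exists an absolutely summable B : ℤ → ℂ with P × B = I. -/
/-- Convolution product of bi-infinite sequences of complex numbers. -/
noncomputable def conv (A B : ℤ → ℂ) : ℤ → ℂ := fun n => ∑' i : ℤ, A i * B (n - i)

/-- The convolution product exists: the defining series converges absolutely at every index. -/
def ConvExists (A B : ℤ → ℂ) : Prop := ∀ n : ℤ, Summable fun i : ℤ => ‖A i * B (n - i)‖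

/-- Absolutely summable bi-infinite sequence. -/
def AbsSummable (A : ℤ → ℂ) : Prop := Summable fun n : ℤ => ‖A n‖

/-- Bounded bi-infinite sequence. -/
def BddSeq (A : ℤ → ℂ) : Prop := ∃ L : ℝ, ∀ n : ℤ, ‖A n‖ ≤ L

/-- The identity for the convolution product. -/
noncomputable def convId : ℤ → ℂ := fun n => if n = 0 then 1 else 0

lemma conv_eq_sum (A B : ℤ → ℂ) (s : Finset ℤ) (hs : ∀ i, A i ≠ 0 → i ∈ s) (n : ℤ) :
    conv A B n = ∑ i ∈ s, A i * B (n - i) := by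
  apply tsum_eq_sum
  intro b hb
  have : A b = 0 := by by_contra h; exact hb (hs b h)
  simp [this]

lemma conv_comm (A B : ℤ → ℂ) : conv A B = conv B A := by
  funext n
  unfold conv
  rw [← Equiv.tsum_eq (Equiv.subLeft n) (fun i => B i * A (n - i))]
  apply tsum_congr
  intro i
  simp [Equiv.subLeft, mul_comm]

lemma convId_conv (B : ℤ → ℂ) : conv convId B = B := by
  funext n
  have hs : ∀ i : ℤ, convId i ≠ 0 → i ∈ ({0} : Finset ℤ) := by
    intro i hi
    simp only [convId] at hi
    by_contra hne
    simp only [Finset.mem_singleton] at hne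
    simp [hne] at hi
  rw [conv_eq_sum convId B {0} hs]
  simp [convId]

lemma absSummable_bdd {A : ℤ → ℂ} (hA : AbsSummable A) : ∃ L : ℝ, ∀ n, ‖A n‖ ≤ L :=
  ⟨∑' n, ‖A n‖, fun n => Summable.le_tsum hA n (fun j _ => norm_nonneg _)⟩

lemma shift_summable {B C : ℤ → ℂ} (h : ∀ n : ℤ, Summable fun j : ℤ => ‖B j * C (n - j)‖)
    (n i : ℤ) : Summable fun j : ℤ => ‖B (j - i) * C (n - j)‖ := by
  refine (Equiv.summable_iff (Equiv.addRight i)).1 ?_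
  have heq : ((fun j : ℤ => ‖B (j - i) * C (n - j)‖) ∘ (Equiv.addRight i)) =
      fun j : ℤ => ‖B j * C (n - i - j)‖ := by
    funext j
    have h1 : j + i - i = j := by omega
    have h2 : n - (j + i) = n - i - j := by omega
    simp only [Function.comp_apply, Equiv.coe_addRight, h1, h2]
  rw [heq]
  exact h (n - i)

lemma conv_assoc (A B C : ℤ → ℂ) (sA : Finset ℤ) (hA : ∀ i, A i ≠ 0 → i ∈ sA)
    (h : ∀ n : ℤ, Summable fun j : ℤ => ‖B j * C (n - j)‖) :
    conv (conv A B) C = conv A (conv B C) := by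
  funext n
  have hsum : ∀ i : ℤ, Summable fun j : ℤ => A i * B (j - i) * C (n - j) := by
    intro i
    have h2 : Summable fun j : ℤ => B (j - i) * C (n - j) :=
      Summable.of_norm (shift_summable h n i)
    simpa [mul_assoc] using h2.mul_left (A i)
  have step1 : ∀ j : ℤ, conv A B j * C (n - j) = ∑ i ∈ sA, A i * B (j - i) * C (n - j) := by
    intro j
    rw [conv_eq_sum A B sA hA j, Finset.sum_mul]
  calc conv (conv A B) C n
      = ∑' j : ℤ, ∑ i ∈ sA, A i * B (j - i) * C (n - j) := tsum_congr step1
    _ = ∑ i ∈ sA, ∑' j : ℤ, A i * B (j - i) * C (n - j) := Summable.tsum_finsetSum (fun i _ => hsum i)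
    _ = conv A (conv B C) n := by
        rw [conv_eq_sum A (conv B C) sA hA]
        apply Finset.sum_congr rfl
        intro i _
        rw [← Equiv.tsum_eq (Equiv.addRight i) (fun j => A i * B (j - i) * C (n - j))]
        unfold conv
        rw [← tsum_mul_left]
        apply tsum_congr
        intro j
        have h1 : j + i - i = j := by omega
        have h2 : n - (j + i) = n - i - j := by omega
        simp only [Equiv.coe_addRight, h1, h2]
        ring

lemma absSummable_conv {A B : ℤ → ℂ} (hA : AbsSummable A) (hB : AbsSummable B) :
    AbsSummable (conv A B) ∧ ∀ n : ℤ, Summable fun i : ℤ => ‖A i * B (n - i)‖ := by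
  have hg : Summable fun p : ℤ × ℤ => ‖A p.1‖ * ‖B p.2‖ :=
    hA.mul_of_nonneg hB (fun _ => norm_nonneg _) (fun _ => norm_nonneg _)
  let ψ : ℤ × ℤ ≃ ℤ × ℤ :=
    ⟨fun p => (p.2, p.1 - p.2), fun q => (q.1 + q.2, q.1), by intro p; simp, by intro q; simp⟩
  have hf : Summable fun p : ℤ × ℤ => ‖A p.2‖ * ‖B (p.1 - p.2)‖ :=
    (Equiv.summable_iff ψ (f := fun p : ℤ × ℤ => ‖A p.1‖ * ‖B p.2‖)).2 hg
  have hpos : 0 ≤ fun p : ℤ × ℤ => ‖A p.2‖ * ‖B (p.1 - p.2)‖ := by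
    intro p
    positivity
  have hsp := (summable_prod_of_nonneg hpos).1 hf
  have fib : ∀ n : ℤ, Summable fun i : ℤ => ‖A i * B (n - i)‖ := by
    intro n
    simpa [norm_mul] using hsp.1 n
  refine ⟨?_, fib⟩
  apply Summable.of_nonneg_of_le (fun n => norm_nonneg _) (fun n => ?_) hsp.2
  calc ‖conv A B n‖ ≤ ∑' i : ℤ, ‖A i * B (n - i)‖ := norm_tsum_le_tsum_norm (fib n)
    _ = ∑' i : ℤ, ‖A i‖ * ‖B (n - i)‖ := by simp [norm_mul]

/-- delta sequence at position m with value c -/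
noncomputable def Eseq (m : ℤ) (c : ℂ) : ℤ → ℂ := fun n => if n = m then c else 0

lemma Eseq_conv (m : ℤ) (c : ℂ) (B : ℤ → ℂ) (n : ℤ) : conv (Eseq m c) B n = c * B (n - m) := by
  have hs : ∀ i : ℤ, Eseq m c i ≠ 0 → i ∈ ({m} : Finset ℤ) := by
    intro i hi
    by_contra hne
    simp only [Finset.mem_singleton] at hne
    simp [Eseq, hne] at hi
  rw [conv_eq_sum _ _ {m} hs]
  simp [Eseq]

lemma Eseq_inv (m : ℤ) (c : ℂ) (hc : c ≠ 0) : conv (Eseq m c) (Eseq (-m) c⁻¹) = convId := by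
  funext n
  rw [Eseq_conv]
  simp only [Eseq, convId]
  by_cases h : n = 0
  · simp [h, hc]
  · have : ¬ (n - m = -m) := by omega
    simp [this, h]

lemma Eseq_absSummable (m : ℤ) (c : ℂ) : AbsSummable (Eseq m c) := by
  apply summable_of_ne_finset_zero (s := {m})
  intro b hb
  simp only [Finset.mem_singleton] at hb
  simp [Eseq, hb]

/-- the sequence of the linear factor z - r -/
noncomputable def Lseq (r : ℂ) : ℤ → ℂ := fun n => if n = 1 then 1 else if n = 0 then -r else 0

lemma Lseq_conv (r : ℂ) (B : ℤ → ℂ) (n : ℤ) : conv (Lseq r) B n = B (n - 1) - r * B n := by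
  have hs : ∀ i : ℤ, Lseq r i ≠ 0 → i ∈ ({0, 1} : Finset ℤ) := by
    intro i hi
    by_contra hne
    simp only [Finset.mem_insert, Finset.mem_singleton, not_or] at hne
    simp [Lseq, hne.1, hne.2] at hi
  rw [conv_eq_sum _ _ {0, 1} hs]
  simp [Lseq]
  ring

lemma Lseq_absSummable (r : ℂ) : AbsSummable (Lseq r) := by
  apply summable_of_ne_finset_zero (s := {0, 1})
  intro b hb
  simp only [Finset.mem_insert, Finset.mem_singleton, not_or] at hb
  simp [Lseq, hb.1, hb.2]

/-- inverse sequence of the linear factor, case |r| < 1 -/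
noncomputable def Mlt (r : ℂ) : ℤ → ℂ := fun n => if n < 0 then r ^ (-n - 1).toNat else 0

/-- inverse sequence of the linear factor, case |r| > 1 -/
noncomputable def Mgt (r : ℂ) : ℤ → ℂ := fun n => if 0 ≤ n then -(r⁻¹ ^ (n.toNat + 1)) else 0

lemma Mlt_inv (r : ℂ) : conv (Lseq r) (Mlt r) = convId := by
  funext n
  rw [Lseq_conv]
  simp only [Mlt, convId]
  rcases lt_trichotomy n 0 with h | h | h
  · have h1 : n - 1 < 0 := by omega
    have h2 : (-(n-1) - 1).toNat = (-n - 1).toNat + 1 := by omega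
    simp only [if_pos h1, if_pos h]
    rw [h2, pow_succ]
    have : ¬ (n = 0) := by omega
    simp [this]
    ring
  · subst h
    norm_num
  · have h1 : ¬ (n - 1 < 0) := by omega
    have h2 : ¬ (n < 0) := by omega
    have h3 : ¬ (n = 0) := by omega
    simp [h1, h2, h3]

lemma Mgt_inv (r : ℂ) (hr : 1 < ‖r‖) : conv (Lseq r) (Mgt r) = convId := by
  have hr0 : r ≠ 0 := by
    intro h
    rw [h] at hr
    simp only [norm_zero] at hr
    linarith
  funext n
  rw [Lseq_conv]
  simp only [Mgt, convId]
  rcases lt_trichotomy n 0 with h | h | h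
  · have h1 : ¬ (0 ≤ n - 1) := by omega
    have h2 : ¬ (0 ≤ n) := by omega
    have h3 : ¬ (n = 0) := by omega
    simp [h1, h2, h3]
    exact fun h' => absurd h' (by omega)
  · subst h
    have h1 : ¬ (0 ≤ (0:ℤ) - 1) := by omega
    simp only [if_pos le_rfl, if_pos rfl, if_neg h1]
    simp [hr0]
  · have h1 : 0 ≤ n - 1 := by omega
    have h2 : 0 ≤ n := by omega
    have h3 : ¬ (n = 0) := by omega
    have h4 : n.toNat = (n - 1).toNat + 1 := by omega
    simp only [if_pos h1, if_pos h2, if_neg h3]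
    rw [h4, pow_succ, pow_succ]
    field_simp
    linear_combination (r⁻¹ ^ (n - 1).toNat) * mul_inv_cancel₀ hr0

lemma Mlt_absSummable (r : ℂ) (hr : ‖r‖ < 1) : AbsSummable (Mlt r) := by
  apply Summable.of_nat_of_neg
  · apply summable_of_ne_finset_zero (s := ∅)
    intro b _
    have : ¬ ((b : ℤ) < 0) := by omega
    simp [Mlt, this]
  · rw [← summable_nat_add_iff 1]
    apply Summable.of_nonneg_of_le (fun b => norm_nonneg _) (fun b => ?_)
      (summable_geometric_of_lt_one (norm_nonneg r) hr)
    have h1 : -((b:ℤ) + 1) < 0 := by omega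
    have h2 : (-(-((b:ℤ) + 1)) - 1).toNat = b := by omega
    simp only [Nat.cast_add, Nat.cast_one, Mlt, if_pos h1, h2]
    rw [norm_pow]

lemma Mgt_absSummable (r : ℂ) (hr : 1 < ‖r‖) : AbsSummable (Mgt r) := by
  have hinv : ‖r⁻¹‖ < 1 := by
    rw [norm_inv]
    rw [inv_lt_one_iff₀]
    right
    exact hr
  apply Summable.of_nat_of_neg
  · apply Summable.of_nonneg_of_le (fun b => norm_nonneg _) (fun b => ?_)
      (summable_geometric_of_lt_one (norm_nonneg r⁻¹) hinv)
    have h1 : (0:ℤ) ≤ (b:ℤ) := by omega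
    have h2 : ((b:ℤ)).toNat = b := by omega
    simp only [Mgt, if_pos h1, h2, norm_neg, norm_pow]
    rw [pow_succ]
    calc ‖r⁻¹‖ ^ b * ‖r⁻¹‖ ≤ ‖r⁻¹‖ ^ b * 1 := by
          apply mul_le_mul_of_nonneg_left hinv.le (pow_nonneg (norm_nonneg _) b)
      _ = ‖r⁻¹‖ ^ b := mul_one _
  · apply summable_of_ne_finset_zero (s := {0})
    intro b hb
    simp only [Finset.mem_singleton] at hb
    have : ¬ ((0:ℤ) ≤ -(b:ℤ)) := by omega
    simp [Mgt, this]
    exact fun h' => absurd h' hb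

open Polynomial in
/-- sequence of a polynomial shifted by m -/
noncomputable def seqP (Q : Polynomial ℂ) (m : ℤ) : ℤ → ℂ :=
  fun n => if m ≤ n then Q.coeff (n - m).toNat else 0

open Polynomial

lemma seqP_support (Q : Polynomial ℂ) (m : ℤ) :
    ∀ n : ℤ, seqP Q m n ≠ 0 → n ∈ Finset.Icc m (m + Q.natDegree) := by
  intro n hn
  simp only [seqP] at hn
  by_cases h : m ≤ n
  · simp only [if_pos h] at hn
    have hd : (n - m).toNat ≤ Q.natDegree := le_natDegree_of_ne_zero hn
    simp only [Finset.mem_Icc]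
    omega
  · simp [if_neg h] at hn

lemma seqP_mul_linear (r : ℂ) (Q : Polynomial ℂ) (m : ℤ) (n : ℤ) :
    seqP ((X - C r) * Q) m n = seqP Q m (n - 1) - r * seqP Q m n := by
  simp only [seqP]
  have expand : (X - C r) * Q = X * Q - C r * Q := by ring
  by_cases h : m ≤ n
  · rcases eq_or_lt_of_le h with heq | hlt
    · -- n = m
      have h1 : ¬ (m ≤ n - 1) := by omega
      have h2 : (n - m).toNat = 0 := by omega
      simp only [if_pos h, if_neg h1, h2, expand, coeff_sub, coeff_C_mul]
      rw [mul_coeff_zero]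
      simp
    · -- m < n
      have h1 : m ≤ n - 1 := by omega
      have h2 : (n - m).toNat = (n - 1 - m).toNat + 1 := by omega
      simp only [if_pos h, if_pos h1, h2, expand, coeff_sub, coeff_C_mul, coeff_X_mul]
  · have h1 : ¬ (m ≤ n - 1) := by omega
    simp [if_neg h, if_neg h1]
    exact fun h' => absurd h' (by omega)

lemma seqP_tsum_eq (Q : Polynomial ℂ) (m : ℤ) (z : ℂ) (hz : z ≠ 0) :
    ∑' n : ℤ, seqP Q m n * z ^ n = z ^ m * Q.eval z := by
  rw [tsum_eq_sum (s := Finset.Icc m (m + Q.natDegree))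
    (by intro b hb; by_contra hc
        exact hb (seqP_support Q m b (by intro h0; simp [h0] at hc)))]
  rw [eval_eq_sum_range, Finset.mul_sum]
  apply Finset.sum_nbij' (i := fun n => (n - m).toNat) (j := fun k => m + (k : ℤ))
  · intro a ha
    simp only [Finset.mem_Icc] at ha
    simp only [Finset.mem_range]
    omega
  · intro a ha
    simp only [Finset.mem_range] at ha
    simp only [Finset.mem_Icc]
    omega
  · intro a ha
    simp only [Finset.mem_Icc] at ha
    omega
  · intro a ha
    simp only [Finset.mem_range] at ha
    omega
  · intro a ha
    simp only [Finset.mem_Icc] at ha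
    have h1 : m ≤ a := ha.1
    simp only [seqP, if_pos h1]
    rw [mul_comm (z ^ m)]
    rw [mul_assoc]
    congr 1
    rw [← zpow_natCast z (a - m).toNat, ← zpow_add₀ hz]
    congr 1
    omega

lemma Lseq_supp (r : ℂ) : ∀ i : ℤ, Lseq r i ≠ 0 → i ∈ ({0, 1} : Finset ℤ) := by
  intro i hi
  by_contra hne
  simp only [Finset.mem_insert, Finset.mem_singleton, not_or] at hne
  simp [Lseq, hne.1, hne.2] at hi

lemma absSummable_zero {A : ℤ → ℂ} (hA : AbsSummable A) :
    ∀ B : ℤ → ℂ, (∃ L : ℝ, ∀ n, ‖B n‖ ≤ L) →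
    ∀ n : ℤ, Summable fun j : ℤ => ‖A j * B (n - j)‖ := by
  intro B ⟨L, hL⟩ n
  apply Summable.of_nonneg_of_le (fun j => norm_nonneg _) (fun j => ?_) (hA.mul_right L)
  rw [norm_mul]
  exact mul_le_mul_of_nonneg_left (hL (n - j)) (norm_nonneg _)

lemma finsupp_summable {A : ℤ → ℂ} (s : Finset ℤ) (hs : ∀ i, A i ≠ 0 → i ∈ s)
    (B : ℤ → ℂ) (n : ℤ) : Summable fun j : ℤ => ‖A j * B (n - j)‖ := by
  apply summable_of_ne_finset_zero (s := s)
  intro b hb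
  have : A b = 0 := by by_contra h; exact hb (hs b h)
  simp [this]

lemma main_induction : ∀ d : ℕ, ∀ Q : Polynomial ℂ, Q.natDegree = d → Q ≠ 0 →
    (∀ z : ℂ, ‖z‖ = 1 → Q.eval z ≠ 0) → ∀ m : ℤ,
    ∃ B : ℤ → ℂ, AbsSummable B ∧ conv (seqP Q m) B = convId := by
  intro d
  induction d with
  | zero =>
    intro Q hdeg hQ0 _ m
    obtain ⟨c, hc⟩ := natDegree_eq_zero.mp hdeg
    have hc0 : c ≠ 0 := by
      intro h
      rw [h, map_zero] at hc
      exact hQ0 hc.symm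
    have hE : seqP Q m = Eseq m c := by
      funext n
      simp only [seqP, Eseq, ← hc, coeff_C]
      by_cases h : n = m
      · subst h
        simp
      · by_cases h2 : m ≤ n
        · have h3 : (n - m).toNat ≠ 0 := by omega
          simp [h, h2, h3]
        · simp [h, h2]
    refine ⟨Eseq (-m) c⁻¹, Eseq_absSummable _ _, ?_⟩
    rw [hE]
    exact Eseq_inv m c hc0
  | succ d ih =>
    intro Q hdeg hQ0 hcirc m
    have hdpos : 0 < Q.degree := natDegree_pos_iff_degree_pos.mp (by omega)
    obtain ⟨r, hr⟩ := Complex.exists_root hdpos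
    have hrn : ‖r‖ ≠ 1 := by
      intro h
      exact hcirc r h hr
    obtain ⟨Q₁, hQ₁⟩ := dvd_iff_isRoot.mpr hr
    have hQ₁0 : Q₁ ≠ 0 := by
      intro h
      rw [h, mul_zero] at hQ₁
      exact hQ0 hQ₁
    have hXC : (X - C r : Polynomial ℂ) ≠ 0 := X_sub_C_ne_zero r
    have hdeg₁ : Q₁.natDegree = d := by
      have := natDegree_mul hXC hQ₁0
      rw [← hQ₁, natDegree_X_sub_C] at this
      omega
    have hcirc₁ : ∀ z : ℂ, ‖z‖ = 1 → Q₁.eval z ≠ 0 := by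
      intro z hz h
      apply hcirc z hz
      rw [hQ₁, eval_mul, h, mul_zero]
    obtain ⟨B₁, hB₁abs, hB₁inv⟩ := ih Q₁ hdeg₁ hQ₁0 hcirc₁ m
    obtain ⟨M, hMabs, hMinv⟩ : ∃ M : ℤ → ℂ, AbsSummable M ∧ conv (Lseq r) M = convId := by
      rcases lt_or_gt_of_ne hrn with h | h
      · exact ⟨Mlt r, Mlt_absSummable r h, Mlt_inv r⟩
      · exact ⟨Mgt r, Mgt_absSummable r h, Mgt_inv r h⟩
    set P₁ := seqP Q₁ m with hP₁
    have hfact : seqP Q m = conv (Lseq r) P₁ := by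
      funext n
      rw [Lseq_conv, hQ₁, seqP_mul_linear]
    refine ⟨conv M B₁, (absSummable_conv hMabs hB₁abs).1, ?_⟩
    rw [hfact]
    rw [conv_assoc (Lseq r) P₁ (conv M B₁) {0, 1} (Lseq_supp r)
      (finsupp_summable (Finset.Icc m (m + Q₁.natDegree)) (seqP_support Q₁ m) _)]
    rw [conv_comm M B₁]
    rw [← conv_assoc P₁ B₁ M (Finset.Icc m (m + Q₁.natDegree)) (seqP_support Q₁ m)
      (absSummable_zero hB₁abs M (absSummable_bdd hMabs))]
    rw [hB₁inv, convId_conv]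
    exact hMinv

theorem stmt6 (P : ℤ → ℂ) (hfin : (Function.support P).Finite) (hne : P ≠ 0)
    (hhyp : ∀ z : ℂ, ‖z‖ = 1 → (∑' n : ℤ, P n * z ^ n) ≠ 0) :
    ∃ B : ℤ → ℂ, AbsSummable B ∧ conv P B = convId := by
  -- find the representation P = seqP Q m
  have hsne : hfin.toFinset.Nonempty := by
    rw [Set.Finite.toFinset_nonempty]
    rw [Function.support_nonempty_iff]
    exact hne
  set s := hfin.toFinset with hs
  set m := s.min' hsne with hm
  have hmin : ∀ j ∈ s, m ≤ j := fun j hj => s.min'_le j hj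
  set Q : Polynomial ℂ := ∑ j ∈ s, C (P j) * X ^ (j - m).toNat with hQ
  have hrep : seqP Q m = P := by
    funext n
    simp only [seqP]
    by_cases h : m ≤ n
    · rw [if_pos h, hQ]
      rw [finset_sum_coeff]
      simp only [coeff_C_mul, coeff_X_pow]
      rw [Finset.sum_eq_single n]
      · by_cases hns : n ∈ s
        · simp
        · have : P n = 0 := by
            by_contra h0
            exact hns (by rw [hs, Set.Finite.mem_toFinset]; exact h0)
          simp [this]
      · intro j hj hjn
        have hjm : m ≤ j := hmin j hj
        have : (n - m).toNat ≠ (j - m).toNat := by omega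
        simp [this]
      · intro hns
        have : P n = 0 := by
          by_contra h0
          exact hns (by rw [hs, Set.Finite.mem_toFinset]; exact h0)
        simp [this]
    · rw [if_neg h]
      symm
      by_contra h0
      have : n ∈ s := by rw [hs, Set.Finite.mem_toFinset]; exact h0
      exact h (hmin n this)
  have hQ0 : Q ≠ 0 := by
    intro h
    apply hne
    rw [← hrep, h]
    funext n
    simp [seqP]
  have hcirc : ∀ z : ℂ, ‖z‖ = 1 → Q.eval z ≠ 0 := by
    intro z hz h
    have hz0 : z ≠ 0 := by
      intro h0
      rw [h0, norm_zero] at hz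
      norm_num at hz
    apply hhyp z hz
    rw [← hrep, seqP_tsum_eq Q m z hz0, h, mul_zero]
  obtain ⟨B, hB1, hB2⟩ := main_induction Q.natDegree Q rfl hQ0 hcirc m
  rw [hrep] at hB2
  exact ⟨B, hB1, hB2⟩
end

section
/- Let P(z) = a₂z² + a₁z + 1 with integer coefficients, a₂ ≠ 0, and D = a₁² - 4a₂ > 0, with distinct real roots θ₁, θ₂. Then a 2×2 integer matrix B commutes with M_P and has det B = ±1 if and only if B has the form ((p, p'), (-a₂p', p - a₁p')) for integers p, p' satisfying (p - a₁p'/2)² - (D/4)p'² = ±1. -/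
lemma key_eq (a₁ a₂ p p' : ℤ) :
    ((p : ℚ) - a₁ * p' / 2) ^ 2 - ((a₁ ^ 2 - 4 * a₂ : ℚ) / 4) * p' ^ 2
      = ((p * (p - a₁ * p') - p' * (-a₂ * p') : ℤ) : ℚ) := by
  push_cast; ring

theorem stmt18 (a₁ a₂ : ℤ) (ha₂ : a₂ ≠ 0) (hD : 0 < a₁ ^ 2 - 4 * a₂)
    (M : Matrix (Fin 2) (Fin 2) ℤ) (hM : M = !![0, 1; -a₂, -a₁])
    (B : Matrix (Fin 2) (Fin 2) ℤ) :
    (B * M = M * B ∧ (B.det = 1 ∨ B.det = -1)) ↔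
      ∃ p p' : ℤ, B = !![p, p'; -a₂ * p', p - a₁ * p'] ∧
        (((p : ℚ) - a₁ * p' / 2) ^ 2 - ((a₁ ^ 2 - 4 * a₂ : ℚ) / 4) * p' ^ 2 = 1 ∨
         ((p : ℚ) - a₁ * p' / 2) ^ 2 - ((a₁ ^ 2 - 4 * a₂ : ℚ) / 4) * p' ^ 2 = -1) := by
  subst hM
  constructor
  · rintro ⟨hcomm, hdet⟩
    have h00 := congrFun (congrFun hcomm 0) 0
    have h01 := congrFun (congrFun hcomm 0) 1
    simp [Matrix.mul_apply, Fin.sum_univ_two] at h00 h01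
    refine ⟨B 0 0, B 0 1, ?_, ?_⟩
    · ext i j
      fin_cases i <;> fin_cases j <;> simp <;> linarith [h00, h01]
    · rw [key_eq]
      have hd : B.det = B 0 0 * (B 0 0 - a₁ * B 0 1) - B 0 1 * (-a₂ * B 0 1) := by
        rw [Matrix.det_fin_two]
        have h10 : B 1 0 = -a₂ * B 0 1 := by linarith [h00]
        have h11 : B 1 1 = B 0 0 - a₁ * B 0 1 := by linarith [h01]
        rw [h10, h11]
      rw [← hd]
      rcases hdet with h | h <;> [left; right] <;> exact_mod_cast congrArg (Int.cast : ℤ → ℚ) h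
  · rintro ⟨p, p', rfl, hdet⟩
    constructor
    · ext i j
      fin_cases i <;> fin_cases j <;> simp [Matrix.mul_apply, Fin.sum_univ_two] <;> ring
    · rw [key_eq] at hdet
      rw [Matrix.det_fin_two_of]
      rcases hdet with h | h <;> [left; right] <;> exact_mod_cast h
end

section
/- Let P(z) = a₂z² + a₁z + 1 with integer coefficients, a₂ ≠ 0, and D = a₁² - 4a₂ = 0 (so a₁ = 2c for an integer c and a₂ = c²). Then the group Saut_P of integer 2×2 matrices B with det B = ±1 and B M_P = M_P B is exactly {±((1 + cp', p'), (-c²p', 1 - cp')) : p' ∈ ℤ} ∪ {±((-1 + cp', p'), (-c²p', -1 - cp')) : p' ∈ ℤ}, and the quotient Saut_P / {±Id} is an infinite cyclic group. -/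
private def Fm (c p : ℤ) : Matrix (Fin 2) (Fin 2) ℤ :=
  !![1 + c * p, p; -c ^ 2 * p, 1 - c * p]

private lemma Fm_mul (c s t : ℤ) : Fm c s * Fm c t = Fm c (s + t) := by
  ext i j
  fin_cases i <;> fin_cases j <;>
    simp [Fm, Matrix.mul_apply, Fin.sum_univ_two] <;> ring

private lemma Fm_det (c s : ℤ) : (Fm c s).det = 1 := by
  simp [Fm, Matrix.det_fin_two_of]; ring

private lemma Fm_comm (c s : ℤ) :
    Fm c s * !![0, 1; -c ^ 2, -(2 * c)] = !![0, 1; -c ^ 2, -(2 * c)] * Fm c s := by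
  ext i j
  fin_cases i <;> fin_cases j <;>
    simp [Fm, Matrix.mul_apply, Fin.sum_univ_two] <;> ring

private lemma Fm_pow (c : ℤ) (n : ℕ) : (Fm c 1) ^ n = Fm c n := by
  induction n with
  | zero =>
    ext i j
    fin_cases i <;> fin_cases j <;> simp [Fm]
  | succ n ih =>
    rw [pow_succ, ih, Fm_mul]
    push_cast
    ring_nf

private lemma Fm_neg (c p : ℤ) :
    -(Fm c (-p)) = !![-1 + c * p, p; -c ^ 2 * p, -1 - c * p] := by
  ext i j
  fin_cases i <;> fin_cases j <;> simp [Fm] <;> ring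

theorem stmt19 (c a₁ a₂ : ℤ) (ha₁ : a₁ = 2 * c) (ha₂ : a₂ = c ^ 2) (hne : a₂ ≠ 0)
    (M : Matrix (Fin 2) (Fin 2) ℤ) (hM : M = !![0, 1; -a₂, -a₁]) :
    (∀ B : Matrix (Fin 2) (Fin 2) ℤ,
      ((B.det = 1 ∨ B.det = -1) ∧ B * M = M * B) ↔
        ∃ p' : ℤ,
          B = !![1 + c * p', p'; -c ^ 2 * p', 1 - c * p'] ∨
          B = -!![1 + c * p', p'; -c ^ 2 * p', 1 - c * p'] ∨
          B = !![-1 + c * p', p'; -c ^ 2 * p', -1 - c * p'] ∨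
          B = -!![-1 + c * p', p'; -c ^ 2 * p', -1 - c * p']) ∧
    -- the quotient `Saut_P / {±Id}` is infinite cyclic:
    ∃ B₀ : Matrix (Fin 2) (Fin 2) ℤ,
      ((B₀.det = 1 ∨ B₀.det = -1) ∧ B₀ * M = M * B₀) ∧
      (∀ B : Matrix (Fin 2) (Fin 2) ℤ,
        ((B.det = 1 ∨ B.det = -1) ∧ B * M = M * B) →
          ∃ n : ℕ, B = B₀ ^ n ∨ -B = B₀ ^ n ∨ B * B₀ ^ n = 1 ∨ -B * B₀ ^ n = 1) ∧
      (∀ n : ℕ, 0 < n → B₀ ^ n ≠ 1 ∧ B₀ ^ n ≠ -1) := by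
  subst ha₁ ha₂ hM
  have hMF : !![0, 1; -c ^ 2, -(2 * c)] = (!![0, 1; -c ^ 2, -(2 * c)] : Matrix (Fin 2) (Fin 2) ℤ) := rfl
  -- characterization of the commutant with det ±1
  have key : ∀ B : Matrix (Fin 2) (Fin 2) ℤ,
      ((B.det = 1 ∨ B.det = -1) ∧ B * !![0, 1; -c ^ 2, -(2 * c)] = !![0, 1; -c ^ 2, -(2 * c)] * B) ↔
      ∃ p' : ℤ, B = Fm c p' ∨ B = -(Fm c p') := by
    intro B
    constructor
    · rintro ⟨hdet, hcomm⟩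
      have h00 := congrFun (congrFun hcomm 0) 0
      have h01 := congrFun (congrFun hcomm 0) 1
      simp [Matrix.mul_apply, Fin.sum_univ_two] at h00 h01
      set a := B 0 0 with ha
      set b := B 0 1 with hb
      have h10 : B 1 0 = -c ^ 2 * b := by linarith [h00]
      have h11 : B 1 1 = a - 2 * c * b := by linarith [h01]
      rw [Matrix.det_fin_two, h10, h11, ← ha, ← hb] at hdet
      have hsq : (a - c * b) ^ 2 = 1 := by
        rcases hdet with h | h
        · nlinarith [h]
        · nlinarith [sq_nonneg (a - c * b), h]
      have : (a - c * b - 1) * (a - c * b + 1) = 0 := by nlinarith [hsq]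
      rcases mul_eq_zero.1 this with h | h
      · refine ⟨b, Or.inl ?_⟩
        rw [Matrix.eta_fin_two B, h10, h11, ← ha, ← hb]
        have haa : a = 1 + c * b := by linarith
        rw [haa]; unfold Fm; congr 1; ring
      · refine ⟨-b, Or.inr ?_⟩
        rw [Matrix.eta_fin_two B, h10, h11, ← ha, ← hb]
        have haa : a = -1 + c * b := by linarith
        rw [haa]
        ext i j
        fin_cases i <;> fin_cases j <;> simp [Fm] <;> ring
    · rintro ⟨p', h | h⟩ <;> subst h
      · exact ⟨Or.inl (Fm_det c p'), Fm_comm c p'⟩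
      · refine ⟨Or.inl ?_, ?_⟩
        · rw [show -(Fm c p') = (-1 : ℤ) • Fm c p' by simp, Matrix.det_smul, Fm_det]
          norm_num
        · rw [Matrix.neg_mul, Matrix.mul_neg, Fm_comm]
    
  constructor
  · intro B
    rw [key B]
    constructor
    · rintro ⟨p', h | h⟩
      · exact ⟨p', Or.inl h⟩
      · refine ⟨-p', Or.inr (Or.inr (Or.inl ?_))⟩
        rw [h]
        ext i j
        fin_cases i <;> fin_cases j <;> simp [Fm] <;> ring
    · rintro ⟨p', h | h | h | h⟩
      · exact ⟨p', Or.inl h⟩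
      · exact ⟨p', Or.inr h⟩
      · exact ⟨-p', Or.inr (by rw [h, ← Fm_neg])⟩
      · exact ⟨-p', Or.inl (by rw [h, ← Fm_neg]; simp)⟩
  · refine ⟨Fm c 1, (key _).2 ⟨1, Or.inl rfl⟩, ?_, ?_⟩
    · intro B hB
      rcases (key B).1 hB with ⟨p', h | h⟩
      · rcases le_or_gt 0 p' with hp | hp
        · exact ⟨p'.toNat, Or.inl (by rw [Fm_pow, Int.toNat_of_nonneg hp, h])⟩
        · refine ⟨(-p').toNat, Or.inr (Or.inr (Or.inl ?_))⟩
          rw [Fm_pow, Int.toNat_of_nonneg (by omega), h, Fm_mul]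
          simp [Fm]
          ext i j; fin_cases i <;> fin_cases j <;> simp [Fm]
      · rcases le_or_gt 0 p' with hp | hp
        · refine ⟨p'.toNat, Or.inr (Or.inl ?_)⟩
          rw [Fm_pow, Int.toNat_of_nonneg hp, h, neg_neg]
        · refine ⟨(-p').toNat, Or.inr (Or.inr (Or.inr ?_))⟩
          rw [Fm_pow, Int.toNat_of_nonneg (by omega), h, neg_neg, Fm_mul]
          ext i j; fin_cases i <;> fin_cases j <;> simp [Fm]
    · intro n hn
      rw [Fm_pow]
      constructor
      · intro h
        have := congrFun (congrFun h 0) 1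
        simp [Fm] at this
        omega
      · intro h
        have := congrFun (congrFun h 0) 1
        simp [Fm] at this
        omega
end
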